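/- Let B be a d×d real symmetric positive definite matrix and let A₁, …, A_m be d×d real symmetric positive semidefinite matrices. Define the set function f on subsets of {1, …, m} by f(S) = log det( B + Σ_{i ∈ S} Aᵢ ). Then f is submodular: for all S ⊆ T ⊆ {1, …, m} and all j ∉ T, f(S ∪ {j}) − f(S) ≥ f(T ∪ {j}) − f(T). -/

import Mathlib

open Matrix

variable {d : ℕ}

lemma det_add_vecMulVec {P : Matrix (Fin d) (Fin d) ℝ} (hP : P.PosDef)
    (v : Fin d → ℝ) :
    (P + vecMulVec v v).det = P.det * (1 + v ⬝ᵥ P⁻¹ *ᵥ v) := by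
  have h := Matrix.det_add_replicateCol_mul_replicateRow (ι := Unit) hP.det_pos.ne'.isUnit v v
  rw [← vecMulVec_eq Unit] at h
  rw [h]
  congr 1
  have hinv : ∀ i j, P⁻¹ i j = P⁻¹ j i := by
    intro i j
    have ht : P⁻¹ᵀ = P⁻¹ := by
      have := hP.inv.isHermitian.eq
      rwa [conjTranspose_eq_transpose_of_trivial] at this
    conv_lhs => rw [← ht]
    rfl
  rw [Matrix.det_unique]
  congr 1
  simp only [Matrix.mul_apply, Matrix.replicateRow_apply, Matrix.replicateCol_apply, Matrix.mulVec,
    dotProduct, Finset.mul_sum, Finset.sum_mul]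
  simp only [Matrix.add_apply, Matrix.one_apply_eq, Matrix.mul_apply, Matrix.replicateRow_apply,
    Matrix.replicateCol_apply, Finset.sum_mul, Finset.mul_sum]
  rw [Finset.sum_comm]
  refine congrArg (1 + ·) (Finset.sum_congr rfl fun i _ => Finset.sum_congr rfl fun k _ => ?_)
  ring

lemma quad_inv_anti {P P' : Matrix (Fin d) (Fin d) ℝ} (hP : P.PosDef) (hP' : P'.PosDef)
    (hQ : (P' - P).PosSemidef) (v : Fin d → ℝ) :
    v ⬝ᵥ P'⁻¹ *ᵥ v ≤ v ⬝ᵥ P⁻¹ *ᵥ v := by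
  set x := P'⁻¹ *ᵥ v with hx
  set y := P⁻¹ *ᵥ v with hy
  have hPx : P' *ᵥ x = v := by
    rw [hx, Matrix.mulVec_mulVec, Matrix.mul_nonsing_inv _ hP'.det_pos.ne'.isUnit, Matrix.one_mulVec]
  have hPy : P *ᵥ y = v := by
    rw [hy, Matrix.mulVec_mulVec, Matrix.mul_nonsing_inv _ hP.det_pos.ne'.isUnit, Matrix.one_mulVec]
  have hsymm : ∀ a b : Fin d → ℝ, a ⬝ᵥ P *ᵥ b = b ⬝ᵥ P *ᵥ a := by
    intro a b
    have ht : Pᵀ = P := by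
      have := hP.isHermitian.eq
      rwa [conjTranspose_eq_transpose_of_trivial] at this
    rw [dotProduct_mulVec, ← Matrix.mulVec_transpose, ht, dotProduct_comm]
  have h1 : 0 ≤ (x - y) ⬝ᵥ P *ᵥ (x - y) := by simpa using hP.posSemidef.dotProduct_mulVec_nonneg (x - y)
  have h2 : 0 ≤ x ⬝ᵥ (P' - P) *ᵥ x := by simpa using hQ.dotProduct_mulVec_nonneg x
  have h2' : x ⬝ᵥ P *ᵥ x ≤ x ⬝ᵥ P' *ᵥ x := by
    rw [Matrix.sub_mulVec, dotProduct_sub] at h2; linarith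
  have hb : x ⬝ᵥ P' *ᵥ x = v ⬝ᵥ x := by rw [hPx, dotProduct_comm]
  have h4 : x ⬝ᵥ P *ᵥ y = v ⬝ᵥ x := by rw [hPy, dotProduct_comm]
  have h3 : y ⬝ᵥ P *ᵥ x = v ⬝ᵥ x := by rw [hsymm, h4]
  have h5 : y ⬝ᵥ P *ᵥ y = v ⬝ᵥ y := by rw [hPy, dotProduct_comm]
  have hexp : (x - y) ⬝ᵥ P *ᵥ (x - y)
      = x ⬝ᵥ P *ᵥ x - 2 * (v ⬝ᵥ x) + v ⬝ᵥ y := by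
    rw [Matrix.mulVec_sub, sub_dotProduct, dotProduct_sub, dotProduct_sub, h4, h3, h5]; ring
  rw [hexp] at h1
  linarith

lemma vecMulVec_posSemidef (v : Fin d → ℝ) : (vecMulVec v v).PosSemidef := by
  have : vecMulVec v v = (replicateRow Unit v)ᴴ * replicateRow Unit v := by
    rw [vecMulVec_eq Unit]
    congr 1
  rw [this]
  exact posSemidef_conjTranspose_mul_self _

lemma rankone_step {P P' : Matrix (Fin d) (Fin d) ℝ} (hP : P.PosDef) (hP' : P'.PosDef)
    (hQ : (P' - P).PosSemidef) (v : Fin d → ℝ) :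
    Real.log (P' + vecMulVec v v).det - Real.log P'.det ≤
      Real.log (P + vecMulVec v v).det - Real.log P.det := by
  have hq : 0 ≤ v ⬝ᵥ P⁻¹ *ᵥ v := by simpa using hP.inv.posSemidef.dotProduct_mulVec_nonneg v
  have hq' : 0 ≤ v ⬝ᵥ P'⁻¹ *ᵥ v := by simpa using hP'.inv.posSemidef.dotProduct_mulVec_nonneg v
  rw [det_add_vecMulVec hP, det_add_vecMulVec hP',
    Real.log_mul hP.det_pos.ne' (by linarith), Real.log_mul hP'.det_pos.ne' (by linarith)]
  have h := quad_inv_anti hP hP' hQ v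
  have hlog : Real.log (1 + v ⬝ᵥ P'⁻¹ *ᵥ v) ≤ Real.log (1 + v ⬝ᵥ P⁻¹ *ᵥ v) :=
    Real.log_le_log (by linarith) (by linarith)
  linarith

lemma sum_rankone_step : ∀ (n : ℕ) (w : Fin n → Fin d → ℝ)
    {P P' : Matrix (Fin d) (Fin d) ℝ} (hP : P.PosDef) (hP' : P'.PosDef)
    (hQ : (P' - P).PosSemidef),
    Real.log (P' + ∑ i, vecMulVec (w i) (w i)).det - Real.log P'.det ≤
      Real.log (P + ∑ i, vecMulVec (w i) (w i)).det - Real.log P.det := by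
  intro n
  induction n with
  | zero => intro w P P' hP hP' hQ; simp
  | succ n ih =>
    intro w P P' hP hP' hQ
    have hsplit : ∀ M : Matrix (Fin d) (Fin d) ℝ,
        M + ∑ i, vecMulVec (w i) (w i)
          = (M + vecMulVec (w 0) (w 0)) + ∑ i : Fin n, vecMulVec (w i.succ) (w i.succ) := by
      intro M
      rw [Fin.sum_univ_succ]
      abel
    have hP1 : (P + vecMulVec (w 0) (w 0)).PosDef := hP.add_posSemidef (vecMulVec_posSemidef _)
    have hP1' : (P' + vecMulVec (w 0) (w 0)).PosDef := hP'.add_posSemidef (vecMulVec_posSemidef _)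
    have hQ1 : ((P' + vecMulVec (w 0) (w 0)) - (P + vecMulVec (w 0) (w 0))).PosSemidef := by
      have : (P' + vecMulVec (w 0) (w 0)) - (P + vecMulVec (w 0) (w 0)) = P' - P := by abel
      rw [this]; exact hQ
    have h1 := ih (fun i => w i.succ) hP1 hP1' hQ1
    have h2 := rankone_step hP hP' hQ (w 0)
    rw [hsplit P, hsplit P']
    linarith

lemma psd_logdet_step {P P' A : Matrix (Fin d) (Fin d) ℝ} (hP : P.PosDef) (hP' : P'.PosDef)
    (hQ : (P' - P).PosSemidef) (hA : A.PosSemidef) :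
    Real.log (P' + A).det - Real.log P'.det ≤ Real.log (P + A).det - Real.log P.det := by
  obtain ⟨X, hX, -, hXA⟩ := open scoped MatrixOrder in
    CFC.exists_sqrt_of_isSelfAdjoint_of_quasispectrumRestricts hA.isHermitian
      (QuasispectrumRestricts.nnreal_of_nonneg hA.nonneg)
  set M := X with hMdef
  have hMM : M * M = A := hXA
  have hMsymm : ∀ i j, M i j = M j i := by
    intro i j
    have ht : Mᵀ = M := by
      have : Mᴴ = M := hX.star_eq
      rwa [conjTranspose_eq_transpose_of_trivial] at this
    conv_lhs => rw [← ht]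
    rfl
  have hdecomp : A = ∑ i : Fin d, vecMulVec (fun j => M j i) (fun j => M j i) := by
    ext j k
    rw [← hMM]
    simp only [Matrix.sum_apply, vecMulVec_apply, Matrix.mul_apply]
    exact Finset.sum_congr rfl fun i _ => by rw [hMsymm i k]
  rw [hdecomp]
  exact sum_rankone_step d _ hP hP' hQ

/-- The log-determinant set function `f(S) = log det(B + Σ_{i ∈ S} Aᵢ)` is submodular,
for `B` symmetric positive definite and `A₁, …, A_m` symmetric positive semidefinite. -/
theorem logdet_submodular
    (d m : ℕ)
    (B : Matrix (Fin d) (Fin d) ℝ) (hB : B.PosDef)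
    (A : Fin m → Matrix (Fin d) (Fin d) ℝ) (hA : ∀ i, (A i).PosSemidef)
    (S T : Finset (Fin m)) (hST : S ⊆ T) (j : Fin m) (hj : j ∉ T) :
    Real.log (B + ∑ i ∈ insert j T, A i).det - Real.log (B + ∑ i ∈ T, A i).det ≤
      Real.log (B + ∑ i ∈ insert j S, A i).det - Real.log (B + ∑ i ∈ S, A i).det := by
  have hjS : j ∉ S := fun h => hj (hST h)
  have hsum : ∀ s : Finset (Fin m), (∑ i ∈ s, A i).PosSemidef := fun s =>
    Finset.sum_induction A _ (fun a b ha hb => ha.add hb) Matrix.PosSemidef.zero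
      (fun i _ => hA i)
  have hP : (B + ∑ i ∈ S, A i).PosDef := hB.add_posSemidef (hsum S)
  have hP' : (B + ∑ i ∈ T, A i).PosDef := hB.add_posSemidef (hsum T)
  have hQ : ((B + ∑ i ∈ T, A i) - (B + ∑ i ∈ S, A i)).PosSemidef := by
    have : (B + ∑ i ∈ T, A i) - (B + ∑ i ∈ S, A i) = ∑ i ∈ T \ S, A i := by
      rw [← Finset.sum_sdiff hST]
      abel
    rw [this]
    exact hsum _
  have h := psd_logdet_step hP hP' hQ (hA j)
  rw [Finset.sum_insert hj, Finset.sum_insert hjS]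
  have e1 : B + (A j + ∑ i ∈ T, A i) = (B + ∑ i ∈ T, A i) + A j := by abel
  have e2 : B + (A j + ∑ i ∈ S, A i) = (B + ∑ i ∈ S, A i) + A j := by abel
  rw [e1, e2]
  exact h
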